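/- Let H₀ be an n×n complex diagonal matrix with trace 0, let O(H₀) = {g H₀ g⁻¹ : g ∈ GL(n,ℂ)}, and let S(H₀) be the (finite) set of diagonal matrices belonging to O(H₀). For every ε > 0 there exists δ > 0 such that: for every x ∈ O(H₀) with ‖x − y‖ > ε for all y ∈ S(H₀), the off-diagonal part of x satisfies ‖x − diag(x)‖ > δ, where diag(x) is the diagonal matrix with the same diagonal entries as x. -/

import Mathlib

attribute [local instance] Matrix.frobeniusNormedAddCommGroup

/-- The adjoint orbit of the diagonal matrix `H₀ = diagonal d`. -/
def adjointOrbit (n : ℕ) (d : Fin n → ℂ) : Set (Matrix (Fin n) (Fin n) ℂ) :=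
  {x | ∃ g : GL (Fin n) ℂ, x = (g : Matrix (Fin n) (Fin n) ℂ) * Matrix.diagonal d *
        ((g⁻¹ : GL (Fin n) ℂ) : Matrix (Fin n) (Fin n) ℂ)}

/-- The diagonal part of a square matrix. -/
def diagPart {n : ℕ} (x : Matrix (Fin n) (Fin n) ℂ) : Matrix (Fin n) (Fin n) ℂ :=
  Matrix.diagonal (fun i => x i i)

attribute [local instance] Matrix.frobeniusNormedSpace

open Matrix

/-- Entrywise bound by the Frobenius norm. -/
theorem AuxEntry.entry_le_norm {n : ℕ} (A : Matrix (Fin n) (Fin n) ℂ) (i j : Fin n) :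
    ‖A i j‖ ≤ ‖A‖ := by
  rw [Matrix.frobenius_norm_def, ← Real.sqrt_eq_rpow]; simp only [Real.rpow_two]
  apply Real.le_sqrt_of_sq_le
  calc ‖A i j‖ ^ 2 ≤ ∑ k, ‖A i k‖ ^ 2 :=
        Finset.single_le_sum (f := fun k => ‖A i k‖ ^ 2) (fun k _ => by positivity)
          (Finset.mem_univ j)
    _ ≤ ∑ l, ∑ k, ‖A l k‖ ^ 2 :=
        Finset.single_le_sum (f := fun l => ∑ k, ‖A l k‖ ^ 2) (fun l _ => by positivity)
          (Finset.mem_univ i)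

/-- Frobenius norm bound from entrywise bounds. -/
theorem AuxEntry.norm_le_of_entries {n : ℕ} (A : Matrix (Fin n) (Fin n) ℂ) (c : ℝ) (hc : 0 ≤ c)
    (h : ∀ i j, ‖A i j‖ ≤ c) : ‖A‖ ≤ n * c := by
  rw [Matrix.frobenius_norm_def, ← Real.sqrt_eq_rpow]; simp only [Real.rpow_two]
  have h2 : (∑ i, ∑ j, ‖A i j‖ ^ 2 : ℝ) ≤ (n * c) ^ 2 := by
    calc (∑ i, ∑ j, ‖A i j‖ ^ 2 : ℝ) ≤ ∑ _i : Fin n, ∑ _j : Fin n, c ^ 2 :=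
          Finset.sum_le_sum fun i _ => Finset.sum_le_sum fun j _ => by
            have := h i j; nlinarith [norm_nonneg (A i j)]
      _ ≤ (n * c) ^ 2 := by simp [Finset.sum_const]; nlinarith [Nat.cast_nonneg (α := ℝ) n]
  have := Real.sqrt_le_sqrt h2
  rwa [Real.sqrt_sq (by positivity)] at this

/-- Determinant bound when one row is small. -/
theorem AuxEntry.det_row_bound {n : ℕ} (A : Matrix (Fin n) (Fin n) ℂ) (i : Fin n) (a b : ℝ)
    (ha : 0 ≤ a) (hrow : ∀ k, ‖A i k‖ ≤ a) (hall : ∀ j k, ‖A j k‖ ≤ b) :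
    ‖A.det‖ ≤ (n.factorial : ℝ) * (a * b ^ (n - 1)) := by
  rw [Matrix.det_apply]
  calc ‖∑ σ : Equiv.Perm (Fin n), Equiv.Perm.sign σ • ∏ j, A (σ j) j‖
      ≤ ∑ σ : Equiv.Perm (Fin n), ‖Equiv.Perm.sign σ • ∏ j, A (σ j) j‖ := norm_sum_le _ _
    _ ≤ ∑ _σ : Equiv.Perm (Fin n), (a * b ^ (n - 1)) := by
        apply Finset.sum_le_sum
        intro σ _
        have hsign : ‖Equiv.Perm.sign σ • ∏ j, A (σ j) j‖ = ‖∏ j, A (σ j) j‖ := by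
          rcases Int.units_eq_one_or (Equiv.Perm.sign σ) with h | h <;> simp [h]
        rw [hsign, norm_prod]
        have hmem : (σ⁻¹ i) ∈ Finset.univ := Finset.mem_univ _
        rw [← Finset.mul_prod_erase Finset.univ _ hmem]
        have h1 : ‖A (σ (σ⁻¹ i)) (σ⁻¹ i)‖ ≤ a := by
          rw [show σ (σ⁻¹ i) = i from σ.apply_symm_apply i]; exact hrow _
        have h2 : ∏ j ∈ Finset.univ.erase (σ⁻¹ i), ‖A (σ j) j‖ ≤ b ^ (n - 1) := by
          calc ∏ j ∈ Finset.univ.erase (σ⁻¹ i), ‖A (σ j) j‖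
              ≤ ∏ _j ∈ Finset.univ.erase (σ⁻¹ i), b :=
              Finset.prod_le_prod (fun j _ => norm_nonneg _) (fun j _ => hall _ _)
            _ = b ^ (n - 1) := by
              rw [Finset.prod_const, Finset.card_erase_of_mem hmem]
              simp
        exact mul_le_mul h1 h2 (Finset.prod_nonneg fun j _ => norm_nonneg _) ha
    _ = (n.factorial : ℝ) * (a * b ^ (n - 1)) := by
        rw [Finset.sum_const, Finset.card_univ, Fintype.card_perm, Fintype.card_fin,
          nsmul_eq_mul]

/-- The characteristic polynomial is constant on the adjoint orbit. -/
theorem AuxEntry.orbit_det {n : ℕ} {d : Fin n → ℂ} {x : Matrix (Fin n) (Fin n) ℂ}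
    (hx : x ∈ adjointOrbit n d) (z : ℂ) :
    (z • (1 : Matrix (Fin n) (Fin n) ℂ) - x).det = ∏ i, (z - d i) := by
  obtain ⟨g, rfl⟩ := hx
  have hgi : (g : Matrix (Fin n) (Fin n) ℂ) * ((g⁻¹ : GL (Fin n) ℂ) : Matrix (Fin n) (Fin n) ℂ)
      = 1 := by
    rw [← Units.val_mul, mul_inv_cancel, Units.val_one]
  have key : z • (1 : Matrix (Fin n) (Fin n) ℂ)
        - (g : Matrix (Fin n) (Fin n) ℂ) * Matrix.diagonal d *
            ((g⁻¹ : GL (Fin n) ℂ) : Matrix (Fin n) (Fin n) ℂ)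
      = (g : Matrix (Fin n) (Fin n) ℂ) * (z • 1 - Matrix.diagonal d) *
          ((g⁻¹ : GL (Fin n) ℂ) : Matrix (Fin n) (Fin n) ℂ) := by
    rw [Matrix.mul_sub, Matrix.sub_mul]
    congr 1
    rw [Matrix.mul_smul, Matrix.mul_one, Matrix.smul_mul, hgi]
  rw [key, Matrix.det_mul, Matrix.det_mul]
  have hdet : (g : Matrix (Fin n) (Fin n) ℂ).det *
      ((g⁻¹ : GL (Fin n) ℂ) : Matrix (Fin n) (Fin n) ℂ).det = 1 := by
    rw [← Matrix.det_mul, hgi, Matrix.det_one]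
  have hd : (z • (1 : Matrix (Fin n) (Fin n) ℂ) - Matrix.diagonal d).det = ∏ i, (z - d i) := by
    rw [Matrix.smul_one_eq_diagonal, Matrix.diagonal_sub, Matrix.det_diagonal]
  calc (g : Matrix (Fin n) (Fin n) ℂ).det * (z • 1 - Matrix.diagonal d).det *
        ((g⁻¹ : GL (Fin n) ℂ) : Matrix (Fin n) (Fin n) ℂ).det
      = (z • (1:Matrix (Fin n) (Fin n) ℂ) - Matrix.diagonal d).det *
        ((g : Matrix (Fin n) (Fin n) ℂ).det *
          ((g⁻¹ : GL (Fin n) ℂ) : Matrix (Fin n) (Fin n) ℂ).det) := by ring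
    _ = ∏ i, (z - d i) := by rw [hdet, mul_one, hd]

/-- Arithmetic core of the diagonal bound. -/
theorem AuxEntry.real_bound {n : ℕ} (hn : 1 ≤ n) {M D δ : ℝ} (hD : 0 ≤ D) (hδ1 : δ ≤ 1)
    (key : (M - D) ^ n ≤ (n.factorial : ℝ) * (δ * (2 * M + 1) ^ (n - 1))) :
    M ≤ 2 * D + 2 + 6 ^ n * n.factorial := by
  by_cases hM : M ≤ 2 * D + 2
  · nlinarith [pow_pos (by norm_num : (0:ℝ) < 6) n,
      (by exact_mod_cast Nat.one_le_iff_ne_zero.mpr n.factorial_ne_zero : (1:ℝ) ≤ n.factorial),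
      pow_nonneg (by norm_num : (0:ℝ) ≤ 6) n,
      (Nat.cast_pos.mpr n.factorial_pos : (0:ℝ) < n.factorial)]
  push_neg at hM
  have hM1 : 1 ≤ M := by linarith
  have h1 : M / 2 ≤ M - D := by linarith
  have h2 : (M / 2) ^ n ≤ (M - D) ^ n := pow_le_pow_left₀ (by linarith) h1 n
  have h3 : (2 * M + 1 : ℝ) ≤ 3 * M := by linarith
  have h4 : (2 * M + 1 : ℝ) ^ (n - 1) ≤ (3 * M) ^ (n - 1) :=
    pow_le_pow_left₀ (by linarith) h3 _
  have h5 : δ * (2 * M + 1) ^ (n - 1) ≤ (3 * M) ^ (n - 1) := by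
    calc δ * (2 * M + 1) ^ (n - 1) ≤ 1 * (3 * M) ^ (n - 1) := by
          apply mul_le_mul hδ1 h4 (by positivity) (by norm_num)
      _ = (3 * M) ^ (n - 1) := one_mul _
  have h6 : (M / 2) ^ n ≤ (n.factorial : ℝ) * (3 * M) ^ (n - 1) := by
    calc (M / 2) ^ n ≤ (n.factorial : ℝ) * (δ * (2 * M + 1) ^ (n - 1)) := le_trans h2 key
      _ ≤ (n.factorial : ℝ) * (3 * M) ^ (n - 1) := by
          apply mul_le_mul_of_nonneg_left h5 (by positivity)
  have hfac : (0:ℝ) < n.factorial := Nat.cast_pos.mpr n.factorial_pos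
  have hMp : (0:ℝ) < M ^ (n - 1) := pow_pos (by linarith) _
  have hexp : M ^ n = M ^ (n - 1) * M := by
    conv_lhs => rw [show n = (n - 1) + 1 from (Nat.succ_pred_eq_of_pos hn).symm]
    rw [pow_succ]
  have h7 : M ^ (n - 1) * M ≤ M ^ (n - 1) * (2 ^ n * 3 ^ (n - 1) * n.factorial) := by
    have e1 : (M / 2) ^ n = M ^ n / 2 ^ n := div_pow M 2 n
    have e2 : (3 * M : ℝ) ^ (n - 1) = 3 ^ (n - 1) * M ^ (n - 1) := mul_pow 3 M (n - 1)
    rw [e1, e2] at h6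
    rw [div_le_iff₀ (by positivity)] at h6
    rw [hexp] at h6
    calc M ^ (n - 1) * M ≤ (n.factorial : ℝ) * (3 ^ (n - 1) * M ^ (n - 1)) * 2 ^ n := h6
      _ = M ^ (n - 1) * (2 ^ n * 3 ^ (n - 1) * n.factorial) := by ring
  have h8 : M ≤ 2 ^ n * 3 ^ (n - 1) * n.factorial :=
    le_of_mul_le_mul_left (by linarith [h7]) hMp
  have h9 : (2:ℝ) ^ n * 3 ^ (n - 1) ≤ 6 ^ n := by
    calc (2:ℝ) ^ n * 3 ^ (n - 1) ≤ 2 ^ n * 3 ^ n := by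
          apply mul_le_mul_of_nonneg_left (pow_le_pow_right₀ (by norm_num) (Nat.sub_le n 1))
            (by positivity)
      _ = 6 ^ n := by rw [← mul_pow]; norm_num
  have h10 : M ≤ 6 ^ n * n.factorial := by
    calc M ≤ 2 ^ n * 3 ^ (n - 1) * n.factorial := h8
      _ ≤ 6 ^ n * n.factorial := mul_le_mul_of_nonneg_right h9 (le_of_lt hfac)
  linarith

/-- Diagonal entries of orbit elements with small off-diagonal part are bounded. -/
theorem AuxEntry.diag_entry_bound {n : ℕ} {d : Fin n → ℂ} {x : Matrix (Fin n) (Fin n) ℂ}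
    (hx : x ∈ adjointOrbit n d) {δ : ℝ} (hδ0 : 0 ≤ δ) (hδ1 : δ ≤ 1)
    (hoff : ∀ j k, j ≠ k → ‖x j k‖ ≤ δ) (i : Fin n) :
    ‖x i i‖ ≤ 2 * (∑ j, ‖d j‖) + 2 + 6 ^ n * n.factorial := by
  set D : ℝ := ∑ j, ‖d j‖ with hDdef
  have hD : 0 ≤ D := Finset.sum_nonneg fun j _ => norm_nonneg _
  have hn : 1 ≤ n := i.pos
  obtain ⟨i₀, -, hmax⟩ := Finset.exists_max_image Finset.univ (fun j => ‖x j j‖)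
    ⟨i, Finset.mem_univ i⟩
  set M : ℝ := ‖x i₀ i₀‖ with hMdef
  have hM0 : 0 ≤ M := norm_nonneg _
  suffices hM : M ≤ 2 * D + 2 + 6 ^ n * n.factorial from
    le_trans (hmax i (Finset.mem_univ i)) hM
  set B : Matrix (Fin n) (Fin n) ℂ := (x i₀ i₀) • 1 - x with hBdef
  have hBapp : ∀ j k, B j k = x i₀ i₀ * (if j = k then 1 else 0) - x j k := by
    intro j k
    simp [hBdef, Matrix.sub_apply, Matrix.smul_apply, Matrix.one_apply, smul_eq_mul]
  have hrow : ∀ k, ‖B i₀ k‖ ≤ δ := by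
    intro k
    by_cases hk : i₀ = k
    · subst hk; rw [hBapp]; simp
      exact hδ0
    · rw [hBapp, if_neg hk]
      simpa using hoff i₀ k hk
  have hall : ∀ j k, ‖B j k‖ ≤ 2 * M + 1 := by
    intro j k
    by_cases hjk : j = k
    · subst hjk
      rw [hBapp, if_pos rfl, mul_one]
      calc ‖x i₀ i₀ - x j j‖ ≤ ‖x i₀ i₀‖ + ‖x j j‖ := norm_sub_le _ _
        _ ≤ M + M := add_le_add le_rfl (hmax j (Finset.mem_univ j))
        _ ≤ 2 * M + 1 := by linarith
    · rw [hBapp, if_neg hjk]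
      have := hoff j k hjk
      calc ‖x i₀ i₀ * 0 - x j k‖ = ‖x j k‖ := by simp
        _ ≤ δ := this
        _ ≤ 2 * M + 1 := by linarith
  have hdetle : ‖B.det‖ ≤ (n.factorial : ℝ) * (δ * (2 * M + 1) ^ (n - 1)) :=
    AuxEntry.det_row_bound B i₀ δ (2 * M + 1) hδ0 hrow hall
  have hdeteq : B.det = ∏ j, (x i₀ i₀ - d j) := AuxEntry.orbit_det hx (x i₀ i₀)
  by_cases hMD : M ≤ D
  · nlinarith [pow_nonneg (by norm_num : (0:ℝ) ≤ 6) n,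
      (Nat.cast_pos.mpr n.factorial_pos : (0:ℝ) < n.factorial)]
  push_neg at hMD
  have hkey : (M - D) ^ n ≤ (n.factorial : ℝ) * (δ * (2 * M + 1) ^ (n - 1)) := by
    have hlow : (M - D) ^ n ≤ ‖B.det‖ := by
      rw [hdeteq, norm_prod]
      have : ∀ j ∈ Finset.univ, (M - D) ≤ ‖x i₀ i₀ - d j‖ := by
        intro j _
        have h1 : ‖d j‖ ≤ D := Finset.single_le_sum (f := fun j => ‖d j‖)
          (fun j _ => norm_nonneg _) (Finset.mem_univ j)
        have := norm_sub_norm_le (x i₀ i₀) (d j)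
        linarith
      calc (M - D) ^ n = ∏ _j : Fin n, (M - D) := by
            rw [Finset.prod_const, Finset.card_univ, Fintype.card_fin]
        _ ≤ ∏ j, ‖x i₀ i₀ - d j‖ :=
            Finset.prod_le_prod (fun j _ => by linarith) this
    linarith
  exact AuxEntry.real_bound hn hD hδ1 hkey

/-- Conversion of equal multisets of values to a permutation. -/
theorem AuxEntry.exists_perm_comp {n : ℕ} (f g : Fin n → ℂ)
    (h : Multiset.map f Finset.univ.val = Multiset.map g Finset.univ.val) :
    ∃ σ : Equiv.Perm (Fin n), f = g ∘ σ := by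
  have hcard : ∀ a : ℂ, Fintype.card {i // f i = a} = Fintype.card {i // g i = a} := by
    intro a
    classical
    have hf := Multiset.count_map (f := f) (s := (Finset.univ : Finset (Fin n)).val) (b := a)
    have hg := Multiset.count_map (f := g) (s := (Finset.univ : Finset (Fin n)).val) (b := a)
    rw [Fintype.card_subtype, Fintype.card_subtype]
    have hcount : Multiset.count a (Multiset.map f Finset.univ.val)
        = Multiset.count a (Multiset.map g Finset.univ.val) := by rw [h]
    rw [hf, hg] at hcount
    simpa [Finset.filter, eq_comm] using hcount
  classical
  have e : ∀ a : ℂ, {i // f i = a} ≃ {i // g i = a} := fun a =>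
    Fintype.equivOfCardEq (hcard a)
  exact ⟨Equiv.ofFiberEquiv e, funext fun i => (Equiv.ofFiberEquiv_map e i).symm⟩

/-- Permuted diagonal matrices lie in the adjoint orbit. -/
theorem AuxEntry.diagonal_perm_mem {n : ℕ} (d : Fin n → ℂ) (σ : Equiv.Perm (Fin n)) :
    Matrix.diagonal (d ∘ σ) ∈ adjointOrbit n d := by
  have hmul : ∀ τ ρ : Equiv.Perm (Fin n), (τ.toPEquiv.toMatrix : Matrix (Fin n) (Fin n) ℂ) *
      ρ.toPEquiv.toMatrix = ((τ.trans ρ).toPEquiv.toMatrix : Matrix (Fin n) (Fin n) ℂ) := by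
    intro τ ρ
    rw [← PEquiv.toMatrix_trans, ← Equiv.toPEquiv_trans]
  have h1 : (σ.toPEquiv.toMatrix : Matrix (Fin n) (Fin n) ℂ) * σ.symm.toPEquiv.toMatrix = 1 := by
    rw [hmul, Equiv.self_trans_symm, Equiv.toPEquiv_refl, PEquiv.toMatrix_refl]
  have h2 : (σ.symm.toPEquiv.toMatrix : Matrix (Fin n) (Fin n) ℂ) * σ.toPEquiv.toMatrix = 1 := by
    rw [hmul, Equiv.symm_trans_self, Equiv.toPEquiv_refl, PEquiv.toMatrix_refl]
  refine ⟨⟨σ.toPEquiv.toMatrix, σ.symm.toPEquiv.toMatrix, h1, h2⟩, ?_⟩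
  show Matrix.diagonal (d ∘ σ) = σ.toPEquiv.toMatrix * Matrix.diagonal d *
    σ.symm.toPEquiv.toMatrix
  rw [PEquiv.toMatrix_toPEquiv_mul, PEquiv.mul_toMatrix_toPEquiv, Equiv.symm_symm]
  ext i j
  by_cases hij : i = j
  · subst hij; simp [Matrix.submatrix_apply]
  · simp only [Matrix.submatrix_apply, Matrix.diagonal_apply, Function.comp_apply]
    rw [if_neg hij, if_neg (fun hh : σ (id i) = id (σ j) =>
      hij (σ.injective (by simpa using hh)))]

/-- Let `H₀ = diagonal d` be a traceless complex diagonal matrix, `O(H₀)` its adjoint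
orbit and `S(H₀)` the set of diagonal matrices lying in `O(H₀)`.  For every `ε > 0`
there is a `δ > 0` such that every `x ∈ O(H₀)` at distance greater than `ε` from all
points of `S(H₀)` has off-diagonal part of norm greater than `δ`. -/
theorem offDiagonal_part_bddBelow_away_from_singularities
    (n : ℕ) (d : Fin n → ℂ) (htr : Matrix.trace (Matrix.diagonal d) = 0) :
    ∀ ε > (0 : ℝ), ∃ δ > (0 : ℝ), ∀ x ∈ adjointOrbit n d,
      (∀ y ∈ adjointOrbit n d, y.IsDiag → ε < ‖x - y‖) →
      δ < ‖x - diagPart x‖ := by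
  intro ε hε
  by_contra hcon
  push_neg at hcon
  -- extract a sequence with off-diagonal part tending to zero
  have hseq : ∀ k : ℕ, ∃ x ∈ adjointOrbit n d,
      (∀ y ∈ adjointOrbit n d, y.IsDiag → ε < ‖x - y‖) ∧
      ‖x - diagPart x‖ ≤ min 1 (1 / (k + 1 : ℝ)) := by
    intro k
    have hpos : (0:ℝ) < min 1 (1 / (k + 1 : ℝ)) := by
      apply lt_min one_pos
      positivity
    obtain ⟨x, hx1, hx2, hx3⟩ := hcon _ hpos
    exact ⟨x, hx1, hx2, hx3⟩
  choose u hu1 hu2 hu3 using hseq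
  -- off-diagonal entries are small
  have hoffentry : ∀ k : ℕ, ∀ j l, j ≠ l → ‖u k j l‖ ≤ min 1 (1 / (k + 1 : ℝ)) := by
    intro k j l hjl
    have h1 : (u k - diagPart (u k)) j l = u k j l := by
      simp [diagPart, Matrix.sub_apply, Matrix.diagonal_apply_ne _ hjl]
    calc ‖u k j l‖ = ‖(u k - diagPart (u k)) j l‖ := by rw [h1]
      _ ≤ ‖u k - diagPart (u k)‖ := AuxEntry.entry_le_norm _ _ _
      _ ≤ min 1 (1 / (k + 1 : ℝ)) := hu3 k
  -- boundedness of the sequence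
  set C : ℝ := 2 * (∑ j, ‖d j‖) + 2 + 6 ^ n * n.factorial with hCdef
  have hC0 : 0 ≤ C := by
    have : (0:ℝ) ≤ ∑ j, ‖d j‖ := Finset.sum_nonneg fun j _ => norm_nonneg _
    positivity
  have hdiagb : ∀ k : ℕ, ∀ i, ‖u k i i‖ ≤ C := by
    intro k i
    exact AuxEntry.diag_entry_bound (hu1 k) (le_of_lt (lt_min one_pos (by positivity)))
      (min_le_left _ _) (fun j l hjl => hoffentry k j l hjl) i
  set R : ℝ := n * C + 1 with hRdef
  have hbound : ∀ k : ℕ, ‖u k‖ ≤ R := by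
    intro k
    have h1 : ‖diagPart (u k)‖ ≤ n * C := by
      apply AuxEntry.norm_le_of_entries _ C hC0
      intro i j
      by_cases hij : i = j
      · subst hij; simpa [diagPart] using hdiagb k i
      · simp [diagPart, Matrix.diagonal_apply_ne _ hij]
        exact hC0
    calc ‖u k‖ = ‖diagPart (u k) + (u k - diagPart (u k))‖ := by
          congr 1; abel
      _ ≤ ‖diagPart (u k)‖ + ‖u k - diagPart (u k)‖ := norm_add_le _ _
      _ ≤ n * C + 1 := add_le_add h1 (le_trans (hu3 k) (min_le_left _ _))
  -- extract a convergent subsequence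
  haveI : ProperSpace (Matrix (Fin n) (Fin n) ℂ) := FiniteDimensional.proper ℂ _
  have hmem : ∀ k : ℕ, u k ∈ Metric.closedBall (0 : Matrix (Fin n) (Fin n) ℂ) R := by
    intro k
    rw [Metric.mem_closedBall, dist_zero_right]
    exact hbound k
  obtain ⟨L, -, φ, hφ, hL⟩ := tendsto_subseq_of_bounded Metric.isBounded_closedBall hmem
  -- convergence of norms
  have hnormconv : Filter.Tendsto (fun k => ‖u (φ k) - L‖) Filter.atTop (nhds 0) := by
    rw [← tendsto_iff_norm_sub_tendsto_zero]
    exact hL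
  -- entrywise convergence
  have hentry : ∀ i j, Filter.Tendsto (fun k => u (φ k) i j) Filter.atTop (nhds (L i j)) := by
    intro i j
    rw [tendsto_iff_norm_sub_tendsto_zero]
    apply squeeze_zero (fun k => norm_nonneg _) (g := fun k => ‖u (φ k) - L‖)
    · intro k
      have : u (φ k) i j - L i j = (u (φ k) - L) i j := by simp [Matrix.sub_apply]
      rw [this]
      exact AuxEntry.entry_le_norm _ _ _
    · exact hnormconv
  -- L is diagonal
  have hLdiag : L.IsDiag := by
    intro i j hij
    have h1 : Filter.Tendsto (fun k => u (φ k) i j) Filter.atTop (nhds (0 : ℂ)) := by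
      rw [tendsto_iff_norm_sub_tendsto_zero]
      apply squeeze_zero (fun k => norm_nonneg _) (g := fun k : ℕ => 1 / (k + 1 : ℝ))
      · intro k
        have h2 : ‖u (φ k) i j‖ ≤ 1 / (φ k + 1 : ℝ) :=
          le_trans (hoffentry (φ k) i j hij) (min_le_right _ _)
        have h3 : (1 : ℝ) / (φ k + 1 : ℝ) ≤ 1 / (k + 1 : ℝ) := by
          apply one_div_le_one_div_of_le (by positivity)
          have : k ≤ φ k := hφ.le_apply
          push_cast
          exact_mod_cast add_le_add_left (Nat.cast_le.mpr this) 1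
        simpa using le_trans h2 h3
      · exact tendsto_one_div_add_atTop_nhds_zero_nat
    exact tendsto_nhds_unique (hentry i j) h1
  -- the determinant identity passes to the limit
  have hdetL : ∀ z : ℂ, (z • (1 : Matrix (Fin n) (Fin n) ℂ) - L).det = ∏ i, (z - d i) := by
    intro z
    have hconv : Filter.Tendsto
        (fun k => (z • (1 : Matrix (Fin n) (Fin n) ℂ) - u (φ k)).det)
        Filter.atTop (nhds ((z • (1 : Matrix (Fin n) (Fin n) ℂ) - L).det)) := by
      simp only [Matrix.det_apply']
      apply tendsto_finset_sum
      intro σ _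
      apply Filter.Tendsto.const_mul
      apply tendsto_finset_prod
      intro i _
      simp only [Matrix.sub_apply]
      exact Filter.Tendsto.const_sub _ (hentry (σ i) i)
    have hconst : ∀ k, (z • (1 : Matrix (Fin n) (Fin n) ℂ) - u (φ k)).det
        = ∏ i, (z - d i) := fun k => AuxEntry.orbit_det (hu1 (φ k)) z
    have : Filter.Tendsto (fun _ : ℕ => ∏ i, (z - d i)) Filter.atTop
        (nhds ((z • (1 : Matrix (Fin n) (Fin n) ℂ) - L).det)) := by
      simpa only [hconst] using hconv
    exact tendsto_nhds_unique this tendsto_const_nhds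
  -- L is a diagonal matrix whose diagonal is a permutation of d
  set L' : Fin n → ℂ := fun i => L i i with hL'def
  have hLeq : L = Matrix.diagonal L' := (hLdiag.diagonal_diag).symm
  have hprod : ∀ z : ℂ, ∏ i, (z - L' i) = ∏ i, (z - d i) := by
    intro z
    have := hdetL z
    rwa [hLeq, Matrix.smul_one_eq_diagonal, Matrix.diagonal_sub, Matrix.det_diagonal] at this
  -- pass to polynomials
  have hpoly : (∏ i, (Polynomial.X - Polynomial.C (L' i)))
      = ∏ i, (Polynomial.X - Polynomial.C (d i)) := by
    apply Polynomial.funext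
    intro z
    simpa [Polynomial.eval_prod] using hprod z
  have hmultiset : Multiset.map L' Finset.univ.val = Multiset.map d Finset.univ.val := by
    have h1 : (∏ i, (Polynomial.X - Polynomial.C (L' i))).roots
        = (∏ i, (Polynomial.X - Polynomial.C (d i))).roots := by rw [hpoly]
    rwa [Finset.prod_eq_multiset_prod, Finset.prod_eq_multiset_prod,
      show (Multiset.map (fun i => Polynomial.X - Polynomial.C (L' i)) Finset.univ.val)
        = Multiset.map (fun a => Polynomial.X - Polynomial.C a)
            (Multiset.map L' Finset.univ.val) by rw [Multiset.map_map]; rfl,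
      show (Multiset.map (fun i => Polynomial.X - Polynomial.C (d i)) Finset.univ.val)
        = Multiset.map (fun a => Polynomial.X - Polynomial.C a)
            (Multiset.map d Finset.univ.val) by rw [Multiset.map_map]; rfl,
      Polynomial.roots_multiset_prod_X_sub_C, Polynomial.roots_multiset_prod_X_sub_C] at h1
  obtain ⟨σ, hσ⟩ := AuxEntry.exists_perm_comp L' d hmultiset
  -- L belongs to the orbit and is diagonal: contradiction
  have hLmem : L ∈ adjointOrbit n d := by
    rw [hLeq, hσ]
    exact AuxEntry.diagonal_perm_mem d σ
  have hfar : ∀ k, ε < ‖u (φ k) - L‖ := fun k =>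
    hu2 (φ k) L hLmem (by rw [hLeq]; exact Matrix.isDiag_diagonal L')
  obtain ⟨k, hk⟩ := (hnormconv.eventually (gt_mem_nhds hε)).exists
  exact absurd (hfar k) (not_lt.mpr (le_of_lt hk))
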